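/- Let R be a finite nontrivial Boolean ring, let a ∈ R, and let J be the unique finite set of logical primes with a = ∑_{p ∈ J} (1 + p). Then the number of ring homomorphisms T : R → ℤ/2ℤ with T(a) = 1 equals the cardinality of J. -/
import Mathlib

/-- An element `p` of a Boolean ring is a logical prime if `p ≠ 1` and
`p * a = 0` implies `a = 0` or `a = 1 + p`. -/
def IsLogicalPrime {R : Type*} [BooleanRing R] (p : R) : Prop :=
  p ≠ 1 ∧ ∀ a : R, p * a = 0 → a = 0 ∨ a = 1 + p

section Aux
open BooleanRing

variable {R : Type*} [BooleanRing R] [DecidableEq R]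

lemma one_add_ne_zero {p : R} (hp : IsLogicalPrime p) : (1 : R) + p ≠ 0 := by
  intro h
  apply hp.1
  have : (1 : R) + (1 + p) = 1 + 0 := by rw [h]
  rwa [← add_assoc, BooleanRing.add_self, zero_add, add_zero] at this

lemma lp_key {p : R} (hp : IsLogicalPrime p) (x : R) :
    (1 + p) * x = 0 ∨ (1 + p) * x = 1 + p := by
  apply hp.2
  have : p * ((1 + p) * x) = (p * (1 + p)) * x := by ring
  rw [this, BooleanRing.mul_one_add_self, zero_mul]

lemma lp_orth {p q : R} (hp : IsLogicalPrime p) (hq : IsLogicalPrime q)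
    (hne : p ≠ q) : (1 + p) * (1 + q) = 0 := by
  rcases lp_key hp (1 + q) with h | h
  · exact h
  rcases lp_key hq (1 + p) with h' | h'
  · rwa [mul_comm] at h'
  · exfalso
    apply hne
    have : (1 : R) + p = 1 + q := by rw [← h, mul_comm, h']
    have := congrArg (fun z => (1 : R) + z) this
    simpa [← add_assoc, BooleanRing.add_self] using this

/-- The ring hom to `ZMod 2` determined by a logical prime. -/
def lpHom (p : R) (hp : IsLogicalPrime p) : R →+* ZMod 2 where
  toFun x := if (1 + p) * x = 1 + p then 1 else 0
  map_one' := by simp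
  map_zero' := by
    simp only [mul_zero]
    rw [if_neg (Ne.symm (one_add_ne_zero hp))]
  map_mul' x y := by
    have key : (1 + p) * (x * y) = ((1 + p) * x) * ((1 + p) * y) := by
      have : ((1 + p) * x) * ((1 + p) * y) = ((1 + p) * (1 + p)) * (x * y) := by ring
      rw [this, BooleanRing.mul_self]
    rcases lp_key hp x with hx | hx <;> rcases lp_key hp y with hy | hy <;>
      simp [key, hx, hy, one_add_ne_zero hp, Ne.symm (one_add_ne_zero hp)]
  map_add' x y := by
    have key : (1 + p) * (x + y) = (1 + p) * x + (1 + p) * y := by ring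
    rcases lp_key hp x with hx | hx <;> rcases lp_key hp y with hy | hy <;>
      simp [key, hx, hy, BooleanRing.add_self, one_add_ne_zero hp,
        Ne.symm (one_add_ne_zero hp)] <;> decide

lemma lpHom_eq_one_iff (p : R) (hp : IsLogicalPrime p) (x : R) :
    lpHom p hp x = 1 ↔ (1 + p) * x = 1 + p := by
  unfold lpHom
  simp only [RingHom.coe_mk, MonoidHom.coe_mk, OneHom.coe_mk]
  split <;> simp_all

lemma lpHom_eq_zero_iff (p : R) (hp : IsLogicalPrime p) (x : R) :
    lpHom p hp x = 0 ↔ (1 + p) * x = 0 := by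
  rcases lp_key hp x with h | h
  · simp [h, lpHom, Ne.symm (one_add_ne_zero hp)]
  · simp [h, lpHom, one_add_ne_zero hp]

end Aux

/-- If `a = ∑_{p ∈ J} (1 + p)` with `J` a set of logical primes, then the
number of ring homomorphisms `T : R → ℤ/2ℤ` with `T a = 1` equals `|J|`. -/
theorem card_homs_eval_one (R : Type*) [BooleanRing R] [Fintype R]
    [Nontrivial R] [DecidableEq R] (a : R) (J : Finset R)
    (hJ : ∀ p ∈ J, IsLogicalPrime p) (ha : a = ∑ p ∈ J, (1 + p)) :
    Nat.card {T : R →+* ZMod 2 // T a = 1} = J.card := by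
  classical
  -- the map from J to homs
  have hval : ∀ p (hpJ : p ∈ J), lpHom p (hJ p hpJ) a = 1 := by
    intro p hpJ
    have hp := hJ p hpJ
    rw [ha, map_sum]
    rw [Finset.sum_eq_single p]
    · rw [lpHom_eq_one_iff]
      exact BooleanRing.mul_self _
    · intro q hqJ hqp
      rw [lpHom_eq_zero_iff]
      exact lp_orth hp (hJ q hqJ) (Ne.symm hqp)
    · intro h; exact absurd hpJ h
  let f : J → {T : R →+* ZMod 2 // T a = 1} :=
    fun p => ⟨lpHom p.1 (hJ p.1 p.2), hval p.1 p.2⟩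
  have hf : Function.Bijective f := by
    constructor
    · rintro ⟨p, hpJ⟩ ⟨q, hqJ⟩ h
      simp only [f, Subtype.mk.injEq] at h
      ext
      by_contra hne
      have h1 : lpHom p (hJ p hpJ) p = 0 := by
        rw [lpHom_eq_zero_iff]
        rw [add_mul, one_mul, BooleanRing.mul_self, BooleanRing.add_self]
      have h2 : lpHom q (hJ q hqJ) p = 1 := by
        rw [lpHom_eq_one_iff]
        have horth := lp_orth (hJ q hqJ) (hJ p hpJ) (Ne.symm hne)
        have : (1 + q) * p = (1 + q) * (1 + (1 + p)) := by
          congr 1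
          rw [← add_assoc, BooleanRing.add_self, zero_add]
        rw [this, mul_add, horth, mul_one, add_zero]
      rw [h] at h1
      rw [h1] at h2
      exact absurd h2 (by decide)
    · rintro ⟨T, hT⟩
      -- find p ∈ J with T p = 0
      have hex : ∃ p ∈ J, T p = 0 := by
        by_contra hcon
        push_neg at hcon
        have : ∀ p ∈ J, T (1 + p) = 0 := by
          intro p hpJ
          have h1 : T p = 1 := by
            have := hcon p hpJ
            rcases (by decide : ∀ x : ZMod 2, x = 0 ∨ x = 1) (T p) with h | h
            · exact absurd h this
            · exact h
          rw [map_add, map_one, h1]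
          decide
        rw [ha, map_sum, Finset.sum_eq_zero this] at hT
        exact absurd hT (by decide)
      obtain ⟨p, hpJ, hTp⟩ := hex
      refine ⟨⟨p, hpJ⟩, ?_⟩
      simp only [f, Subtype.mk.injEq]
      ext x
      have hT1p : T (1 + p) = 1 := by rw [map_add, map_one, hTp, add_zero]
      rcases lp_key (hJ p hpJ) x with h | h
      · have : T ((1 + p) * x) = 0 := by rw [h, map_zero]
        rw [map_mul, hT1p, one_mul] at this
        rw [(lpHom_eq_zero_iff p (hJ p hpJ) x).mpr h, this]
      · have : T ((1 + p) * x) = 1 := by rw [h, hT1p]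
        rw [map_mul, hT1p, one_mul] at this
        rw [(lpHom_eq_one_iff p (hJ p hpJ) x).mpr h, this]
  rw [Nat.card_congr (Equiv.ofBijective f hf).symm]
  simp [Nat.card_eq_fintype_card]
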